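/- Let 0 < R₁ < 1 < R₂ < ∞ and b ∈ (R₁,1). If x̃ ≥ 2 is a real number with Δ_{x̃,b} > 0, then the function x ↦ Δ_{x,b} is strictly increasing on [x̃,∞) and Δ_{x,b} > 0 for every x ≥ x̃. In particular, if an integer m₀ ≥ 2 satisfies Δ_{m₀,b} > 0, then Δ_{m,b} > 0 for every integer m ≥ m₀. -/

import Mathlib

open Real

noncomputable section

namespace DCV1

/-- The constant `𝔠_b` of the annulus `{R₁ < |z| < R₂}`. -/
def frakC (R1 R2 b : ℝ) : ℝ :=
  (-(b^2/2) * Real.log b - (1 - b^2)/4 - ((1 - b^2)/2) * Real.log R2) / Real.log (R1/R2)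

/-- `f_t(x) = (1−t^{2x})/x`. -/
def ff (t x : ℝ) : ℝ := (1 - t ^ (2*x)) / x

/-- `g_{t₁,t₂}(x) = (1−t₁^{2x})(1−t₂^{2x})`. -/
def gg (t1 t2 x : ℝ) : ℝ := (1 - t1 ^ (2*x)) * (1 - t2 ^ (2*x))

/-- `Π_{x,b}`. -/
def PiX (R1 R2 b x : ℝ) : ℝ :=
  (1 - b^2) * (b^2 + 2 * frakC R1 R2 b) / b^2
    - (gg (b/R2) (R1/b) x + gg (1/R2) R1 x) / (x^2 * ff (R1/R2) x)

/-- `E_{x,b}`. -/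
def EX (R1 R2 b x : ℝ) : ℝ :=
  b ^ x * gg (1/R2) (R1/b) x / (x^2 * ff (R1/R2) x)

/-- The extended discriminant `Δ_{x,b} = Π_{x,b}²/4 − E_{x,b}²`. -/
def DeltaX (R1 R2 b x : ℝ) : ℝ := PiX R1 R2 b x ^ 2 / 4 - EX R1 R2 b x ^ 2

open Set

set_option linter.unusedSectionVars false
set_option linter.unusedVariables false

/-- `2 log s ≤ s - 1/s` for `s ≥ 1` (i.e. `sinh θ ≥ θ`). -/
lemma aux_log_le {s : ℝ} (hs : 1 ≤ s) : 2 * Real.log s ≤ s - 1 / s := by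
  have hder : ∀ t : ℝ, 0 < t →
      HasDerivAt (fun t : ℝ => t - t⁻¹ - 2 * Real.log t) (1 - -(t^2)⁻¹ - 2 * t⁻¹) t := by
    intro t ht
    exact ((hasDerivAt_id t).sub (hasDerivAt_inv (ne_of_gt ht))).sub
      (by simpa using (Real.hasDerivAt_log (ne_of_gt ht)).const_mul (2:ℝ))
  have hmono : MonotoneOn (fun t : ℝ => t - t⁻¹ - 2 * Real.log t) (Ici (1:ℝ)) := by
    apply monotoneOn_of_deriv_nonneg (convex_Ici 1)
    · intro t ht
      exact ((hder t (lt_of_lt_of_le one_pos ht)).continuousAt).continuousWithinAt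
    · intro t ht
      rw [interior_Ici] at ht
      exact ((hder t (lt_trans one_pos ht)).differentiableAt).differentiableWithinAt
    · intro t ht
      rw [interior_Ici] at ht
      have ht0 : 0 < t := lt_trans one_pos ht
      rw [(hder t ht0).deriv]
      have e1 : (t^2)⁻¹ = t⁻¹ * t⁻¹ := by rw [sq, mul_inv]
      have e2 : t⁻¹ * t = 1 := inv_mul_cancel₀ (ne_of_gt ht0)
      nlinarith [sq_nonneg (1 - t⁻¹)]
  have h1 := hmono (by simp : (1:ℝ) ∈ Ici (1:ℝ)) (mem_Ici.mpr hs) hs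
  simp only [Real.log_one, inv_one] at h1
  rw [one_div]
  linarith

/-- `log s ≥ 2(s-1)/(s+1)` for `s ≥ 1` (i.e. `tanh θ ≤ θ`). -/
lemma aux_log_ge {s : ℝ} (hs : 1 ≤ s) : 2 * (s - 1) / (s + 1) ≤ Real.log s := by
  have hder : ∀ t : ℝ, 0 < t →
      HasDerivAt (fun t : ℝ => Real.log t - 2 * (t - 1) / (t + 1))
        (t⁻¹ - (2 * 1 * (t + 1) - 2 * (t - 1) * 1) / (t + 1) ^ 2) t := by
    intro t ht
    have ht1 : t + 1 ≠ 0 := by positivity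
    exact (Real.hasDerivAt_log (ne_of_gt ht)).sub
      ((((hasDerivAt_id t).sub_const 1).const_mul 2).div ((hasDerivAt_id t).add_const 1) ht1)
  have hmono : MonotoneOn (fun t : ℝ => Real.log t - 2 * (t - 1) / (t + 1)) (Ici (1:ℝ)) := by
    apply monotoneOn_of_deriv_nonneg (convex_Ici 1)
    · intro t ht
      exact ((hder t (lt_of_lt_of_le one_pos ht)).continuousAt).continuousWithinAt
    · intro t ht
      rw [interior_Ici] at ht
      exact ((hder t (lt_trans one_pos ht)).differentiableAt).differentiableWithinAt
    · intro t ht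
      rw [interior_Ici] at ht
      have ht0 : 0 < t := lt_trans one_pos ht
      rw [(hder t ht0).deriv]
      rw [sub_nonneg, div_le_iff₀ (by positivity), inv_mul_eq_div, le_div_iff₀ ht0]
      nlinarith [sq_nonneg (t - 1)]
  have h1 := hmono (by simp : (1:ℝ) ∈ Ici (1:ℝ)) (mem_Ici.mpr hs) hs
  simp only [Real.log_one] at h1
  norm_num at h1
  linarith

set_option maxHeartbeats 1000000 in
/-- The core inequality behind monotonicity of both `Π` and `E`. -/
lemma aux_core {A C W : ℝ} (hA : 1 < A) (hC : 1 < C) (hW : 1 ≤ W) :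
    Real.log A / (A - 1) + Real.log C / (C - 1) - Real.log (A * C * W) / (A * C * W - 1)
      < 1 + Real.log W / 2 := by
  have hA0 : (0:ℝ) < A := lt_trans one_pos hA
  have hC0 : (0:ℝ) < C := lt_trans one_pos hC
  have hW0 : (0:ℝ) < W := lt_of_lt_of_le one_pos hW
  obtain ⟨α, hα0, hα2⟩ : ∃ α : ℝ, 0 < α ∧ α ^ 2 = A :=
    ⟨Real.sqrt A, Real.sqrt_pos.mpr hA0, Real.sq_sqrt hA0.le⟩
  obtain ⟨γ, hγ0, hγ2⟩ : ∃ γ : ℝ, 0 < γ ∧ γ ^ 2 = C :=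
    ⟨Real.sqrt C, Real.sqrt_pos.mpr hC0, Real.sq_sqrt hC0.le⟩
  have hα1 : 1 < α := by nlinarith
  have hγ1 : 1 < γ := by nlinarith
  -- log bounds
  have bA : Real.log A ≤ (A - 1) / α := by
    have h1 : 2 * Real.log α ≤ α - 1 / α := aux_log_le hα1.le
    have h2 : Real.log A = 2 * Real.log α := by
      rw [← hα2, Real.log_pow]; push_cast; ring
    have h3 : α - 1/α = (A - 1)/α := by rw [← hα2]; field_simp
    rw [h2]; rw [← h3]; exact h1
  have bC : Real.log C ≤ (C - 1) / γ := by
    have h1 : 2 * Real.log γ ≤ γ - 1 / γ := aux_log_le hγ1.le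
    have h2 : Real.log C = 2 * Real.log γ := by
      rw [← hγ2, Real.log_pow]; push_cast; ring
    have h3 : γ - 1/γ = (C - 1)/γ := by rw [← hγ2]; field_simp
    rw [h2]; rw [← h3]; exact h1
  have bW : 2 * (W - 1) / (W + 1) ≤ Real.log W := aux_log_ge hW
  have hlogW0 : 0 ≤ Real.log W := Real.log_nonneg hW
  have hAC1 : 1 < A * C := by nlinarith
  have hM : 0 < A * C * W - 1 := by nlinarith [mul_le_mul_of_nonneg_left hW (le_of_lt (lt_trans one_pos hAC1))]
  have hAm : 0 < A - 1 := by linarith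
  have hCm : 0 < C - 1 := by linarith
  have hCW1 : 0 < C * W - 1 := by nlinarith [mul_le_mul_of_nonneg_left hW hC0.le]
  have hAW1 : 0 < A * W - 1 := by nlinarith [mul_le_mul_of_nonneg_left hW hA0.le]
  set M := A * C * W - 1 with hMdef
  -- scaled version
  have key : Real.log A / (A - 1) * M + Real.log C / (C - 1) * M - Real.log (A * C * W)
      < (1 + Real.log W / 2) * M := by
    have expand : Real.log A / (A - 1) * M + Real.log C / (C - 1) * M - Real.log (A * C * W)
        = Real.log A * (A * (C*W - 1)) / (A - 1) + Real.log C * (C * (A*W - 1)) / (C - 1)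
          - Real.log W := by
      rw [Real.log_mul (by positivity) (ne_of_gt hW0), Real.log_mul (ne_of_gt hA0) (ne_of_gt hC0),
        hMdef]
      field_simp
      ring
    rw [expand]
    have t1 : Real.log A * (A * (C*W - 1)) / (A - 1) ≤ α * (C * W - 1) := by
      rw [div_le_iff₀ hAm]
      have h3 : Real.log A * (A * (C*W-1)) ≤ ((A-1)/α) * (A * (C*W-1)) :=
        mul_le_mul_of_nonneg_right bA (by positivity)
      have h4 : ((A-1)/α) * (A * (C*W-1)) = α * (C*W-1) * (A-1) := by
        rw [← hα2]; field_simp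
      linarith
    have t2 : Real.log C * (C * (A*W - 1)) / (C - 1) ≤ γ * (A * W - 1) := by
      rw [div_le_iff₀ hCm]
      have h3 : Real.log C * (C * (A*W-1)) ≤ ((C-1)/γ) * (C * (A*W-1)) :=
        mul_le_mul_of_nonneg_right bC (by positivity)
      have h4 : ((C-1)/γ) * (C * (A*W-1)) = γ * (A*W-1) * (C-1) := by
        rw [← hγ2]; field_simp
      linarith
    set G := α * γ with hG
    have hG0 : 0 < G := mul_pos hα0 hγ0
    have hG1 : 1 < G := by nlinarith
    have hGW1 : 0 < G * W - 1 := by nlinarith [mul_le_mul_of_nonneg_left hW hG0.le]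
    have strict : α * (C*W - 1) + γ * (A*W - 1) < (G + 1) * (G * W - 1) := by
      have e : α * (C*W - 1) + γ * (A*W - 1) = (α + γ) * (G * W - 1) := by
        rw [← hα2, ← hγ2, hG]; ring
      rw [e]
      have hs : α + γ < G + 1 := by nlinarith [mul_pos (sub_pos.mpr hα1) (sub_pos.mpr hγ1)]
      exact mul_lt_mul_of_pos_right hs hGW1
    have step3 : G * (W - 1) ≤ Real.log W * (G^2 * W + 1) / 2 := by
      have hWp : (0:ℝ) < W + 1 := by linarith
      have b1 : 2 * (W - 1) ≤ Real.log W * (W + 1) := by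
        rw [div_le_iff₀ hWp] at bW; linarith
      have b2 : G * (W + 1) ≤ G^2 * W + 1 := by
        nlinarith [mul_nonneg (sub_nonneg.mpr hG1.le) hGW1.le]
      nlinarith [mul_le_mul_of_nonneg_left b1 hG0.le,
        mul_le_mul_of_nonneg_left b2 hlogW0]
    have eACW : A * C * W = G^2 * W := by rw [← hα2, ← hγ2, hG]; ring
    have expand2 : (G + 1) * (G * W - 1) = (G^2*W - 1) + G * (W - 1) := by ring
    have expand3 : (1 + Real.log W / 2) * M = (G^2*W - 1) + Real.log W * (G^2*W - 1) / 2 := by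
      rw [hMdef, eACW]; ring
    rw [expand3]
    linarith
  -- divide back by M
  have hMne : M ≠ 0 := ne_of_gt hM
  have e1 : Real.log A / (A - 1) = Real.log A / (A - 1) * M / M := by
    rw [mul_div_cancel_right₀ _ hMne]
  have e2 : Real.log C / (C - 1) = Real.log C / (C - 1) * M / M := by
    rw [mul_div_cancel_right₀ _ hMne]
  have e3 : (1 + Real.log W / 2) = (1 + Real.log W / 2) * M / M := by
    rw [mul_div_cancel_right₀ _ hMne]
  calc Real.log A / (A - 1) + Real.log C / (C - 1) - Real.log (A * C * W) / M
      = (Real.log A / (A - 1) * M + Real.log C / (C - 1) * M - Real.log (A * C * W)) / M := by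
        field_simp
    _ < ((1 + Real.log W / 2) * M) / M := by
        exact (div_lt_div_iff_of_pos_right hM).mpr key
    _ = 1 + Real.log W / 2 := by rw [mul_div_cancel_right₀ _ hMne]

/-- The core inequality in `m`-form, as used for the log-derivatives. -/
lemma aux_core' {U V R : ℝ} (hU0 : 0 < U) (hU1 : U < 1) (hV0 : 0 < V) (hV1 : V < 1)
    (hR0 : 0 < R) (hRUV : R ≤ U * V) :
    U * (-Real.log U) / (1 - U) + V * (-Real.log V) / (1 - V) - R * (-Real.log R) / (1 - R) - 1
      < (Real.log U + Real.log V - Real.log R) / 2 := by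
  have hA : 1 < U⁻¹ := (one_lt_inv₀ hU0).mpr hU1
  have hC : 1 < V⁻¹ := (one_lt_inv₀ hV0).mpr hV1
  have hW : 1 ≤ U * V / R := (one_le_div hR0).mpr hRUV
  have h := aux_core hA hC hW
  have eACW : U⁻¹ * V⁻¹ * (U * V / R) = R⁻¹ := by field_simp
  rw [eACW] at h
  rw [Real.log_inv, Real.log_inv, Real.log_inv] at h
  rw [Real.log_div (by positivity) (ne_of_gt hR0),
    Real.log_mul (ne_of_gt hU0) (ne_of_gt hV0)] at h
  have e1 : -Real.log U / (U⁻¹ - 1) = U * (-Real.log U) / (1 - U) := by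
    rw [show U⁻¹ - 1 = (1 - U)/U by field_simp, div_div_eq_mul_div]; ring
  have e2 : -Real.log V / (V⁻¹ - 1) = V * (-Real.log V) / (1 - V) := by
    rw [show V⁻¹ - 1 = (1 - V)/V by field_simp, div_div_eq_mul_div]; ring
  have e3 : -Real.log R / (R⁻¹ - 1) = R * (-Real.log R) / (1 - R) := by
    rw [show R⁻¹ - 1 = (1 - R)/R by field_simp, div_div_eq_mul_div]; ring
  rw [e1, e2, e3] at h
  linarith

/-- Auxiliary function covering both `E` (with `c = b`) and the two summands of
the `Π`-fraction (with `c = 1`). -/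
def Phi (c u v : ℝ) (x : ℝ) : ℝ :=
  c ^ x * ((1 - u ^ (2*x)) * (1 - v ^ (2*x))) / (x * (1 - (c*u*v) ^ (2*x)))

/-- The log of `Phi`. -/
def LL (c u v : ℝ) (x : ℝ) : ℝ :=
  x * Real.log c + Real.log (1 - u ^ (2*x)) + Real.log (1 - v ^ (2*x))
    - Real.log x - Real.log (1 - (c*u*v) ^ (2*x))

lemma hasDerivAt_two_rpow {w : ℝ} (hw : 0 < w) (x : ℝ) :
    HasDerivAt (fun x : ℝ => w ^ (2*x)) (w ^ (2*x) * (2 * Real.log w)) x := by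
  have h1 : HasDerivAt (fun x : ℝ => Real.log w * (2 * x)) (Real.log w * 2) x := by
    simpa using ((hasDerivAt_id x).const_mul (2:ℝ)).const_mul (Real.log w)
  have h2 := h1.exp
  simp only [← Real.rpow_def_of_pos hw] at h2
  convert h2 using 1
  ring

section PhiAnti

variable {c u v : ℝ} (hc0 : 0 < c) (hc1 : c ≤ 1) (hu0 : 0 < u) (hu1 : u < 1)
  (hv0 : 0 < v) (hv1 : v < 1)

include hc0 hc1 hu0 hu1 hv0 hv1

lemma cuv_mem : 0 < c*u*v ∧ c*u*v < 1 := by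
  refine ⟨by positivity, ?_⟩
  calc c*u*v ≤ 1*u*v := by
        apply mul_le_mul_of_nonneg_right _ hv0.le
        exact mul_le_mul_of_nonneg_right hc1 hu0.le
    _ < 1 := by nlinarith

lemma phi_pos {x : ℝ} (hx : 0 < x) : 0 < Phi c u v x := by
  obtain ⟨hw0, hw1⟩ := cuv_mem hc0 hc1 hu0 hu1 hv0 hv1
  have h1 : u ^ (2*x) < 1 := Real.rpow_lt_one hu0.le hu1 (by positivity)
  have h2 : v ^ (2*x) < 1 := Real.rpow_lt_one hv0.le hv1 (by positivity)
  have h3 : (c*u*v) ^ (2*x) < 1 := Real.rpow_lt_one hw0.le hw1 (by positivity)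
  have h4 : (0:ℝ) < c ^ x := Real.rpow_pos_of_pos hc0 _
  apply div_pos
  · apply mul_pos h4
    exact mul_pos (by linarith) (by linarith)
  · exact mul_pos hx (by linarith)

lemma LL_hasDeriv {x : ℝ} (hx : 0 < x) :
    HasDerivAt (LL c u v)
      (Real.log c + -(u ^ (2*x) * (2 * Real.log u)) / (1 - u ^ (2*x))
        + -(v ^ (2*x) * (2 * Real.log v)) / (1 - v ^ (2*x)) - x⁻¹
        - -((c*u*v) ^ (2*x) * (2 * Real.log (c*u*v))) / (1 - (c*u*v) ^ (2*x))) x := by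
  obtain ⟨hw0, hw1⟩ := cuv_mem hc0 hc1 hu0 hu1 hv0 hv1
  have h1 : u ^ (2*x) < 1 := Real.rpow_lt_one hu0.le hu1 (by positivity)
  have h2 : v ^ (2*x) < 1 := Real.rpow_lt_one hv0.le hv1 (by positivity)
  have h3 : (c*u*v) ^ (2*x) < 1 := Real.rpow_lt_one hw0.le hw1 (by positivity)
  have t1 : HasDerivAt (fun x : ℝ => x * Real.log c) (Real.log c) x := by
    simpa using (hasDerivAt_id x).mul_const (Real.log c)
  have inner : ∀ w : ℝ, 0 < w → HasDerivAt (fun x : ℝ => 1 - w ^ (2*x))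
      (-(w ^ (2*x) * (2 * Real.log w))) x := by
    intro w hw
    have := (hasDerivAt_const x (1:ℝ)).sub (hasDerivAt_two_rpow hw x)
    rw [zero_sub] at this
    exact this
  have t2 := (inner u hu0).log (by linarith : (1:ℝ) - u ^ (2*x) ≠ 0)
  have t3 := (inner v hv0).log (by linarith : (1:ℝ) - v ^ (2*x) ≠ 0)
  have t5 := (inner (c*u*v) hw0).log (by linarith : (1:ℝ) - (c*u*v) ^ (2*x) ≠ 0)
  have t4 := Real.hasDerivAt_log (ne_of_gt hx)
  exact (((t1.add t2).add t3).sub t4).sub t5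

lemma LL_deriv_neg {x : ℝ} (hx : 0 < x) :
    Real.log c + -(u ^ (2*x) * (2 * Real.log u)) / (1 - u ^ (2*x))
        + -(v ^ (2*x) * (2 * Real.log v)) / (1 - v ^ (2*x)) - x⁻¹
        - -((c*u*v) ^ (2*x) * (2 * Real.log (c*u*v))) / (1 - (c*u*v) ^ (2*x)) < 0 := by
  obtain ⟨hw0, hw1⟩ := cuv_mem hc0 hc1 hu0 hu1 hv0 hv1
  set U := u ^ (2*x) with hU
  set V := v ^ (2*x) with hV
  set R := (c*u*v) ^ (2*x) with hR
  have hU0 : 0 < U := Real.rpow_pos_of_pos hu0 _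
  have hV0 : 0 < V := Real.rpow_pos_of_pos hv0 _
  have hR0 : 0 < R := Real.rpow_pos_of_pos hw0 _
  have hU1 : U < 1 := Real.rpow_lt_one hu0.le hu1 (by positivity)
  have hV1 : V < 1 := Real.rpow_lt_one hv0.le hv1 (by positivity)
  have hRUV : R ≤ U * V := by
    rw [hR, hU, hV, show c*u*v = c*(u*v) by ring,
      Real.mul_rpow hc0.le (by positivity), Real.mul_rpow hu0.le hv0.le]
    have hle : c ^ (2*x) ≤ 1 := Real.rpow_le_one hc0.le hc1 (by positivity)
    calc c ^ (2*x) * (u ^ (2*x) * v ^ (2*x)) ≤ 1 * (u ^ (2*x) * v ^ (2*x)) :=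
          mul_le_mul_of_nonneg_right hle (by positivity)
      _ = u ^ (2*x) * v ^ (2*x) := one_mul _
  have hcore := aux_core' hU0 hU1 hV0 hV1 hR0 hRUV
  -- log identities
  have lU : Real.log U = (2*x) * Real.log u := Real.log_rpow hu0 _
  have lV : Real.log V = (2*x) * Real.log v := Real.log_rpow hv0 _
  have lR : Real.log R = (2*x) * Real.log (c*u*v) := Real.log_rpow hw0 _
  have lcuv : Real.log (c*u*v) = Real.log c + Real.log u + Real.log v := by
    rw [Real.log_mul (by positivity) (ne_of_gt hv0), Real.log_mul (ne_of_gt hc0) (ne_of_gt hu0)]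
  -- divide core inequality by x
  have hxne : x ≠ 0 := ne_of_gt hx
  have hdiv := div_lt_div_of_pos_right hcore hx
  have n1 : (1:ℝ) - U ≠ 0 := by linarith
  have n2 : (1:ℝ) - V ≠ 0 := by linarith
  have hR1 : R < 1 := by nlinarith
  have n3 : (1:ℝ) - R ≠ 0 := by linarith
  have eLHS : (U * (-Real.log U) / (1 - U) + V * (-Real.log V) / (1 - V)
        - R * (-Real.log R) / (1 - R) - 1) / x
      = -(U * (2 * Real.log u)) / (1 - U) + -(V * (2 * Real.log v)) / (1 - V) - x⁻¹
        - -(R * (2 * Real.log (c*u*v))) / (1 - R) := by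
    rw [lU, lV, lR]
    field_simp
    ring
  have eRHS : (Real.log U + Real.log V - Real.log R) / 2 / x = -Real.log c := by
    rw [lU, lV, lR, lcuv]
    field_simp
    ring
  rw [eLHS, eRHS] at hdiv
  linarith

lemma phi_eq_exp_LL {x : ℝ} (hx : 0 < x) : Phi c u v x = Real.exp (LL c u v x) := by
  obtain ⟨hw0, hw1⟩ := cuv_mem hc0 hc1 hu0 hu1 hv0 hv1
  have h1 : u ^ (2*x) < 1 := Real.rpow_lt_one hu0.le hu1 (by positivity)
  have h2 : v ^ (2*x) < 1 := Real.rpow_lt_one hv0.le hv1 (by positivity)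
  have h3 : (c*u*v) ^ (2*x) < 1 := Real.rpow_lt_one hw0.le hw1 (by positivity)
  unfold Phi LL
  rw [Real.exp_sub, Real.exp_sub, Real.exp_add, Real.exp_add,
    Real.exp_log (by linarith : (0:ℝ) < 1 - u ^ (2*x)),
    Real.exp_log (by linarith : (0:ℝ) < 1 - v ^ (2*x)),
    Real.exp_log (by linarith : (0:ℝ) < 1 - (c*u*v) ^ (2*x)),
    Real.exp_log hx,
    show Real.exp (x * Real.log c) = c ^ x by rw [Real.rpow_def_of_pos hc0, mul_comm]]
  have n3 : (1:ℝ) - (c*u*v) ^ (2*x) ≠ 0 := by linarith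
  field_simp

lemma phi_anti : StrictAntiOn (Phi c u v) (Ici (2:ℝ)) := by
  have hLL : StrictAntiOn (LL c u v) (Ici (2:ℝ)) := by
    apply strictAntiOn_of_deriv_neg (convex_Ici 2)
    · intro x hxmem
      have hx : (0:ℝ) < x := lt_of_lt_of_le two_pos hxmem
      exact ((LL_hasDeriv hc0 hc1 hu0 hu1 hv0 hv1 hx).continuousAt).continuousWithinAt
    · intro x hxmem
      rw [interior_Ici] at hxmem
      have hx : (0:ℝ) < x := lt_trans two_pos hxmem
      rw [(LL_hasDeriv hc0 hc1 hu0 hu1 hv0 hv1 hx).deriv]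
      exact LL_deriv_neg hc0 hc1 hu0 hu1 hv0 hv1 hx
  intro a ha b hb hab
  have ha0 : (0:ℝ) < a := lt_of_lt_of_le two_pos ha
  have hb0 : (0:ℝ) < b := lt_of_lt_of_le two_pos hb
  rw [phi_eq_exp_LL hc0 hc1 hu0 hu1 hv0 hv1 ha0,
    phi_eq_exp_LL hc0 hc1 hu0 hu1 hv0 hv1 hb0]
  exact Real.exp_lt_exp.mpr (hLL ha hb hab)

end PhiAnti

lemma aux_pow2 {w : ℝ} (hw : 0 ≤ w) (x : ℝ) : w ^ (2*x) = (w ^ x)^2 := by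
  rw [show (2:ℝ)*x = x*2 by ring, Real.rpow_mul hw, Real.rpow_two]

lemma aux_bern {β x : ℝ} (hβ0 : 0 < β) (hβ1 : β < 1) (hx : 2 ≤ x) :
    2*(1 - β ^ x) ≤ x*(1 - β^2) := by
  have hx2 : (1:ℝ) ≤ x/2 := by linarith
  have hs : (-1:ℝ) ≤ β^2 - 1 := by nlinarith [sq_nonneg β]
  have h := one_add_mul_self_le_rpow_one_add hs hx2
  rw [show (1:ℝ) + (β^2-1) = β^2 by ring] at h
  have e2 : ((β^2 : ℝ))^(x/2) = β ^ x := by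
    rw [← Real.rpow_natCast β 2, ← Real.rpow_mul hβ0.le,
      show ((2:ℕ):ℝ)*(x/2) = x by push_cast; ring]
  rw [e2] at h
  linarith

section Params

variable {R1 R2 b : ℝ} (hR1 : 0 < R1) (hR1' : R1 < 1) (hR2 : 1 < R2)
  (hb1 : R1 < b) (hb2 : b < 1)

include hR1 hR1' hR2 hb1 hb2

lemma hb0 : 0 < b := lt_trans hR1 hb1

lemma aux_denom {x : ℝ} (hx : 0 < x) :
    x^2 * ff (R1/R2) x = x * (1 - (R1/R2) ^ (2*x)) := by
  unfold ff
  field_simp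

lemma aux_r_mem : 0 < R1/R2 ∧ R1/R2 < 1 := by
  constructor
  · positivity
  · rw [div_lt_one (by linarith)]; linarith

lemma aux_denom_pos {x : ℝ} (hx : 0 < x) : 0 < x * (1 - (R1/R2) ^ (2*x)) := by
  obtain ⟨h0, h1⟩ := aux_r_mem hR1 hR1' hR2 hb1 hb2
  have := Real.rpow_lt_one h0.le h1 (by positivity : (0:ℝ) < 2*x)
  exact mul_pos hx (by linarith)

lemma EX_eq {x : ℝ} (hx : 0 < x) : EX R1 R2 b x = Phi b (1/R2) (R1/b) x := by
  have hb0' : 0 < b := lt_trans hR1 hb1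
  unfold EX gg Phi
  rw [aux_denom hR1 hR1' hR2 hb1 hb2 hx]
  rw [show b * (1/R2) * (R1/b) = R1/R2 by field_simp]

lemma Spart_eq {x : ℝ} (hx : 0 < x) :
    (gg (b/R2) (R1/b) x + gg (1/R2) R1 x) / (x^2 * ff (R1/R2) x)
      = Phi 1 (b/R2) (R1/b) x + Phi 1 (1/R2) R1 x := by
  have hb0' : 0 < b := lt_trans hR1 hb1
  unfold gg Phi
  rw [aux_denom hR1 hR1' hR2 hb1 hb2 hx]
  rw [show (1:ℝ) * (b/R2) * (R1/b) = R1/R2 by field_simp,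
    show (1:ℝ) * (1/R2) * R1 = R1/R2 by field_simp,
    Real.one_rpow]
  rw [← add_div]
  ring_nf

lemma PiX_eq {x : ℝ} (hx : 0 < x) :
    PiX R1 R2 b x = (1 - b^2) * (b^2 + 2 * frakC R1 R2 b) / b^2
      - (Phi 1 (b/R2) (R1/b) x + Phi 1 (1/R2) R1 x) := by
  unfold PiX
  rw [← Spart_eq hR1 hR1' hR2 hb1 hb2 hx]

lemma mem_br2 : 0 < b/R2 ∧ b/R2 < 1 := by
  constructor
  · have := lt_trans hR1 hb1; positivity
  · rw [div_lt_one (by linarith)]; linarith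

lemma mem_r1b : 0 < R1/b ∧ R1/b < 1 := by
  have hb0' : 0 < b := lt_trans hR1 hb1
  constructor
  · positivity
  · rw [div_lt_one hb0']; exact hb1

lemma mem_1r2 : 0 < 1/R2 ∧ 1/R2 < 1 := by
  constructor
  · positivity
  · rw [div_lt_one (by linarith)]; linarith

/-- `𝔠_b ≥ 0`. -/
lemma frakC_nonneg : 0 ≤ frakC R1 R2 b := by
  have hb0' : 0 < b := lt_trans hR1 hb1
  unfold frakC
  have hlog : Real.log (R1/R2) < 0 := by
    rw [Real.log_div (ne_of_gt hR1) (by linarith)]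
    have h1 : Real.log R1 < 0 := Real.log_neg hR1 hR1'
    have h2 : 0 < Real.log R2 := Real.log_pos hR2
    linarith
  have hnum : -(b^2/2) * Real.log b - (1 - b^2)/4 - ((1 - b^2)/2) * Real.log R2 ≤ 0 := by
    have h2 : 0 < Real.log R2 := Real.log_pos hR2
    have h5 : -Real.log b ≤ b⁻¹ - 1 := by
      have h3 := Real.log_le_sub_one_of_pos (show (0:ℝ) < b⁻¹ by positivity)
      rwa [Real.log_inv] at h3
    have h6 : (b^2/2) * (-Real.log b) ≤ (b^2/2) * (b⁻¹ - 1) :=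
      mul_le_mul_of_nonneg_left h5 (by positivity)
    have h7 : (b^2/2) * (b⁻¹ - 1) = b*(1-b)/2 := by field_simp
    have h8 : b*(1-b)/2 ≤ (1-b^2)/4 := by nlinarith [sq_nonneg (1-b)]
    have h9 : 0 ≤ ((1-b^2)/2) * Real.log R2 := mul_nonneg (by nlinarith) h2.le
    have e : -(b^2/2)*Real.log b = (b^2/2)*(-Real.log b) := by ring
    linarith
  rw [← neg_div_neg_eq]
  exact div_nonneg (by linarith) (by linarith)

set_option maxHeartbeats 1600000 in
lemma aux_key {x : ℝ} (hx : 2 ≤ x) :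
    (gg (b/R2) (R1/b) x + gg (1/R2) R1 x) / (x^2 * ff (R1/R2) x) - 2 * EX R1 R2 b x
      ≤ 1 - b^2 := by
  have hx0 : (0:ℝ) < x := by linarith
  have hb0' : 0 < b := lt_trans hR1 hb1
  have hR20 : (0:ℝ) < R2 := by linarith
  unfold EX gg
  rw [aux_denom hR1 hR1' hR2 hb1 hb2 hx0]
  set s := b ^ x with hsdef
  set a := R1 ^ x with hadef
  set e := (1/R2) ^ x with hedef
  have hs0 : 0 < s := Real.rpow_pos_of_pos hb0' _
  have hs1 : s < 1 := Real.rpow_lt_one hb0'.le hb2 hx0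
  have ha0 : 0 < a := Real.rpow_pos_of_pos hR1 _
  have has : a < s := Real.rpow_lt_rpow hR1.le hb1 hx0
  have he0 : 0 < e := Real.rpow_pos_of_pos (by positivity) _
  have he1 : e < 1 := Real.rpow_lt_one (by positivity) (by rw [div_lt_one hR20]; linarith) hx0
  have e_br2 : (b/R2) ^ (2*x) = (s*e)^2 := by
    rw [show b/R2 = b*(1/R2) by ring, aux_pow2 (by positivity),
      Real.mul_rpow hb0'.le (by positivity)]
  have e_r1b : (R1/b) ^ (2*x) = (a/s)^2 := by
    rw [aux_pow2 (by positivity), Real.div_rpow hR1.le hb0'.le]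
  have e_r2 : (1/R2) ^ (2*x) = e^2 := by rw [aux_pow2 (by positivity)]
  have e_r1 : R1 ^ (2*x) = a^2 := by rw [aux_pow2 hR1.le]
  have e_r : (R1/R2) ^ (2*x) = (a*e)^2 := by
    rw [show R1/R2 = R1*(1/R2) by ring, aux_pow2 (by positivity),
      Real.mul_rpow hR1.le (by positivity)]
  rw [e_br2, e_r1b, e_r2, e_r1, e_r]
  have hae0 : 0 < a*e := mul_pos ha0 he0
  have hae : a*e < 1 := by
    nlinarith [mul_pos (sub_pos.mpr (show a < 1 by linarith)) (sub_pos.mpr he1)]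
  have hae1 : (a*e)^2 < 1 := by nlinarith
  have hD : 0 < x * (1 - (a*e)^2) := mul_pos hx0 (by linarith)
  have hsne : s ≠ 0 := ne_of_gt hs0
  have hnum : (1 - (s*e)^2) * (1 - (a/s)^2) + (1 - e^2) * (1 - a^2)
      - 2*s*((1 - e^2) * (1 - (a/s)^2)) ≤ 2*(1-s)*(1 - (a*e)^2) := by
    have ident : 2*(1-s)*(1 - (a*e)^2)
        - ((1 - (s*e)^2) * (1 - (a/s)^2) + (1 - e^2) * (1 - a^2)
          - 2*s*((1 - e^2) * (1 - (a/s)^2)))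
        = (1-s)^2 * (a^2/s^2 + e^2 + 2*a^2*e^2/s) := by
      field_simp
      ring
    have hpos : 0 ≤ (1-s)^2 * (a^2/s^2 + e^2 + 2*a^2*e^2/s) := by positivity
    linarith
  have comb : ((1 - (s*e)^2) * (1 - (a/s)^2) + (1 - e^2) * (1 - a^2)) / (x * (1 - (a*e)^2))
      - 2 * (s * ((1 - e^2) * (1 - (a/s)^2)) / (x * (1 - (a*e)^2)))
      = ((1 - (s*e)^2) * (1 - (a/s)^2) + (1 - e^2) * (1 - a^2)
          - 2*s*((1 - e^2) * (1 - (a/s)^2))) / (x * (1 - (a*e)^2)) := by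
    ring
  rw [comb]
  have step1 : ((1 - (s*e)^2) * (1 - (a/s)^2) + (1 - e^2) * (1 - a^2)
      - 2*s*((1 - e^2) * (1 - (a/s)^2))) / (x * (1 - (a*e)^2))
      ≤ (2*(1-s)*(1 - (a*e)^2)) / (x * (1 - (a*e)^2)) :=
    (div_le_div_iff_of_pos_right hD).mpr hnum
  have step2 : (2*(1-s)*(1 - (a*e)^2)) / (x * (1 - (a*e)^2)) = 2*(1-s)/x := by
    rw [mul_comm x (1 - (a*e)^2), ← div_div, mul_div_assoc,
      div_self (by linarith : (1:ℝ) - (a*e)^2 ≠ 0), mul_one]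
  have step3 : 2*(1-s)/x ≤ 1 - b^2 := by
    rw [div_le_iff₀ hx0]
    have := aux_bern hb0' hb2 hx
    linarith
  calc _ ≤ (2*(1-s)*(1 - (a*e)^2)) / (x * (1 - (a*e)^2)) := step1
    _ = 2*(1-s)/x := step2
    _ ≤ 1 - b^2 := step3

lemma aux_C_ge : 1 - b^2 ≤ (1 - b^2) * (b^2 + 2 * frakC R1 R2 b) / b^2 := by
  have hb0' : 0 < b := lt_trans hR1 hb1
  have h := frakC_nonneg hR1 hR1' hR2 hb1 hb2
  rw [le_div_iff₀ (by positivity : (0:ℝ) < b^2)]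
  nlinarith [mul_nonneg (show (0:ℝ) ≤ 1 - b^2 by nlinarith) h]

lemma aux_PiE {x : ℝ} (hx : 2 ≤ x) : 0 ≤ PiX R1 R2 b x + 2 * EX R1 R2 b x := by
  unfold PiX
  have h1 := aux_key hR1 hR1' hR2 hb1 hb2 hx
  have h2 := aux_C_ge hR1 hR1' hR2 hb1 hb2
  linarith

lemma EX_pos {x : ℝ} (hx : 2 ≤ x) : 0 < EX R1 R2 b x := by
  have hx0 : (0:ℝ) < x := by linarith
  rw [EX_eq hR1 hR1' hR2 hb1 hb2 hx0]
  exact phi_pos (lt_trans hR1 hb1) hb2.le (mem_1r2 hR1 hR1' hR2 hb1 hb2).1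
    (mem_1r2 hR1 hR1' hR2 hb1 hb2).2 (mem_r1b hR1 hR1' hR2 hb1 hb2).1
    (mem_r1b hR1 hR1' hR2 hb1 hb2).2 hx0

lemma EX_anti : StrictAntiOn (EX R1 R2 b) (Ici (2:ℝ)) := by
  intro p hp q hq hpq
  rw [EX_eq hR1 hR1' hR2 hb1 hb2 (lt_of_lt_of_le two_pos hp),
    EX_eq hR1 hR1' hR2 hb1 hb2 (lt_of_lt_of_le two_pos hq)]
  exact phi_anti (lt_trans hR1 hb1) hb2.le (mem_1r2 hR1 hR1' hR2 hb1 hb2).1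
    (mem_1r2 hR1 hR1' hR2 hb1 hb2).2 (mem_r1b hR1 hR1' hR2 hb1 hb2).1
    (mem_r1b hR1 hR1' hR2 hb1 hb2).2 hp hq hpq

lemma PiX_mono : StrictMonoOn (PiX R1 R2 b) (Ici (2:ℝ)) := by
  intro p hp q hq hpq
  have hp0 : (0:ℝ) < p := lt_of_lt_of_le two_pos hp
  have hq0 : (0:ℝ) < q := lt_of_lt_of_le two_pos hq
  rw [PiX_eq hR1 hR1' hR2 hb1 hb2 hp0, PiX_eq hR1 hR1' hR2 hb1 hb2 hq0]
  have h1 := phi_anti one_pos le_rfl (mem_br2 hR1 hR1' hR2 hb1 hb2).1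
    (mem_br2 hR1 hR1' hR2 hb1 hb2).2 (mem_r1b hR1 hR1' hR2 hb1 hb2).1
    (mem_r1b hR1 hR1' hR2 hb1 hb2).2 hp hq hpq
  have h2 := phi_anti one_pos le_rfl (mem_1r2 hR1 hR1' hR2 hb1 hb2).1
    (mem_1r2 hR1 hR1' hR2 hb1 hb2).2 hR1 hR1' hp hq hpq
  linarith

end Params

/-- If `x̃ ≥ 2` and `Δ_{x̃,b} > 0`, then `x ↦ Δ_{x,b}` is strictly increasing on `[x̃,∞)`
and strictly positive there; in particular, if an integer `m₀ ≥ 2` satisfies `Δ_{m₀,b} > 0`,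
then `Δ_{m,b} > 0` for every integer `m ≥ m₀`. -/
theorem discriminant_monotone (R1 R2 b : ℝ) (hR1 : 0 < R1) (hR1' : R1 < 1) (hR2 : 1 < R2)
    (hb1 : R1 < b) (hb2 : b < 1) :
    (∀ xt : ℝ, 2 ≤ xt → 0 < DeltaX R1 R2 b xt →
        StrictMonoOn (fun x => DeltaX R1 R2 b x) (Set.Ici xt) ∧
        ∀ x : ℝ, xt ≤ x → 0 < DeltaX R1 R2 b x) ∧
    (∀ m₀ : ℕ, 2 ≤ m₀ → 0 < DeltaX R1 R2 b (m₀ : ℝ) →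
        ∀ m : ℕ, m₀ ≤ m → 0 < DeltaX R1 R2 b (m : ℝ)) := by
  have H1 : ∀ xt : ℝ, 2 ≤ xt → 0 < DeltaX R1 R2 b xt →
      StrictMonoOn (fun x => DeltaX R1 R2 b x) (Set.Ici xt) ∧
      ∀ x : ℝ, xt ≤ x → 0 < DeltaX R1 R2 b x := by
    intro xt hxt hΔ
    have hmemxt : xt ∈ Ici (2:ℝ) := hxt
    have hE := EX_pos hR1 hR1' hR2 hb1 hb2 hxt
    have hkey := aux_PiE hR1 hR1' hR2 hb1 hb2 hxt
    have hΔ' : EX R1 R2 b xt ^ 2 < PiX R1 R2 b xt ^ 2 / 4 := by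
      unfold DeltaX at hΔ; linarith
    have hPipos : 2 * EX R1 R2 b xt < PiX R1 R2 b xt := by
      by_contra hcon
      push_neg at hcon
      nlinarith [mul_nonneg hkey (sub_nonneg.mpr hcon)]
    have hmono : StrictMonoOn (fun x => DeltaX R1 R2 b x) (Set.Ici xt) := by
      intro p hp q hq hpq
      have hp2 : p ∈ Ici (2:ℝ) := le_trans hxt (mem_Ici.mp hp)
      have hq2 : q ∈ Ici (2:ℝ) := le_trans hxt (mem_Ici.mp hq)
      have hPip : PiX R1 R2 b xt ≤ PiX R1 R2 b p := by
        rcases eq_or_lt_of_le (mem_Ici.mp hp) with h|h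
        · rw [h]
        · exact (PiX_mono hR1 hR1' hR2 hb1 hb2 hmemxt hp2 h).le
      have hEp : EX R1 R2 b p ≤ EX R1 R2 b xt := by
        rcases eq_or_lt_of_le (mem_Ici.mp hp) with h|h
        · rw [h]
        · exact (EX_anti hR1 hR1' hR2 hb1 hb2 hmemxt hp2 h).le
      have hPipq : PiX R1 R2 b p < PiX R1 R2 b q :=
        PiX_mono hR1 hR1' hR2 hb1 hb2 hp2 hq2 hpq
      have hEq : EX R1 R2 b q < EX R1 R2 b p := EX_anti hR1 hR1' hR2 hb1 hb2 hp2 hq2 hpq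
      have hEqpos : 0 < EX R1 R2 b q := EX_pos hR1 hR1' hR2 hb1 hb2 hq2
      have hPp0 : 0 < PiX R1 R2 b p := by linarith
      show DeltaX R1 R2 b p < DeltaX R1 R2 b q
      unfold DeltaX
      nlinarith [mul_pos (sub_pos.mpr hPipq) (show 0 < PiX R1 R2 b q + PiX R1 R2 b p by linarith),
        mul_pos (sub_pos.mpr hEq) (show 0 < EX R1 R2 b p + EX R1 R2 b q by linarith)]
    refine ⟨hmono, ?_⟩
    intro x hxx
    rcases eq_or_lt_of_le hxx with h|h
    · rw [← h]; exact hΔ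
    · have h2 := hmono self_mem_Ici (mem_Ici.mpr h.le) h
      simp only at h2
      exact hΔ.trans h2
  exact ⟨H1, fun m₀ hm₀ hΔ m hm =>
    (H1 (m₀ : ℝ) (by exact_mod_cast hm₀) hΔ).2 (m : ℝ) (by exact_mod_cast hm)⟩

end DCV1
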